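/- Let 2 < p < ∞ and let X be a closed subspace of L_p. Then one of the following holds: (A) there is a constant M > 0 such that ‖v‖_{p/2} ≤ M·‖v‖_1 for all v ∈ V(X); or (B) no such constant M exists, in which case there exist pairwise disjoint measurable sets A_i ⊆ [0,1] and elements v_i ∈ V(X) (i ∈ ℕ) such that ‖1_{A_i}·v_i‖_{p/2} → 1 and ‖1_{[0,1]∖A_i}·v_i‖_{p/2} → 0 as i → ∞. -/

import Mathlib

open MeasureTheory Filter Topology ENNReal

noncomputable section

/-- Lebesgue (probability) measure on `[0,1]`. -/
def μ01 : Measure ℝ := MeasureTheory.volume.restrict (Set.Icc 0 1)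

/-- A sequence in a normed space is weakly null if it converges to `0` in the weak topology. -/
def WeaklyNull {E : Type*} [NormedAddCommGroup E] [NormedSpace ℝ E] (x : ℕ → E) : Prop :=
  ∀ φ : E →L[ℝ] ℝ, Tendsto (fun n => φ (x n)) atTop (𝓝 0)

/-- `x n → v` in the weak topology. -/
def WeakTendsto {E : Type*} [NormedAddCommGroup E] [NormedSpace ℝ E]
    (x : ℕ → E) (v : E) : Prop :=
  ∀ φ : E →L[ℝ] ℝ, Tendsto (fun n => φ (x n)) atTop (𝓝 (φ v))

/-- `V(X)`: the set of limiting conditional variances of `X`, i.e. all `v ∈ L_{p/2}` which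
are weak limits in `L_{p/2}` of the squares of a weakly null sequence in `X`. -/
def VX (p : ℝ≥0∞) [Fact (1 ≤ p)] [Fact (1 ≤ p / 2)] (X : Submodule ℝ (Lp ℝ p μ01)) :
    Set (Lp ℝ (p / 2) μ01) :=
  {v | ∃ x : ℕ → Lp ℝ p μ01, (∀ n, x n ∈ X) ∧ WeaklyNull x ∧
    ∃ w : ℕ → Lp ℝ (p / 2) μ01,
      (∀ n, (⇑(w n) : ℝ → ℝ) =ᵐ[μ01] fun ω => ((x n : ℝ → ℝ) ω) ^ 2) ∧
      WeakTendsto w v}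

instance : IsProbabilityMeasure μ01 := by
  constructor; rw [μ01, Measure.restrict_apply_univ, Real.volume_Icc]; norm_num

lemma ae_mem_Icc01 : ∀ᵐ ω ∂μ01, ω ∈ Set.Icc (0:ℝ) 1 := ae_restrict_mem measurableSet_Icc

lemma rpow_le_aux {x T : ℝ≥0∞} {r : ℝ} (hr : 1 ≤ r) (hx : x ≠ ∞)
    (hxT : x ≤ T) : x ^ r ≤ T ^ (r - 1) * x := by
  rcases eq_or_ne x 0 with h | h
  · subst h; rw [ENNReal.zero_rpow_of_pos (by linarith), mul_zero]
  · have : x ^ r = x ^ (r - 1) * x ^ (1 : ℝ) := by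
      rw [← ENNReal.rpow_add _ _ h hx]; norm_num
    rw [this, ENNReal.rpow_one]
    exact mul_le_mul_left (ENNReal.rpow_le_rpow hxT (by linarith)) x

lemma lintegral_rpow_eq_one {q : ℝ≥0∞} (hq0 : q ≠ 0) (hqt : q ≠ ∞) {f : ℝ → ℝ}
    (h : eLpNorm f q μ01 = 1) :
    ∫⁻ ω, (‖f ω‖₊ : ℝ≥0∞) ^ q.toReal ∂μ01 = 1 := by
  have hr0 : q.toReal ≠ 0 := ENNReal.toReal_ne_zero.mpr ⟨hq0, hqt⟩
  rw [eLpNorm_eq_lintegral_rpow_enorm_toReal hq0 hqt] at h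
  simp only [enorm_eq_nnnorm] at h
  have := congrArg (· ^ q.toReal) h
  simpa [← ENNReal.rpow_mul, one_div, inv_mul_cancel₀ hr0] using this

lemma vx_smul (p : ℝ≥0∞) [Fact (1 ≤ p)] [Fact (1 ≤ p / 2)] (X : Submodule ℝ (Lp ℝ p μ01))
    {v : Lp ℝ (p / 2) μ01} (hv : v ∈ VX p X) {c : ℝ} (hc : 0 ≤ c) : c • v ∈ VX p X := by
  obtain ⟨x, hxX, hxnull, w, hw, hwlim⟩ := hv
  refine ⟨fun n => Real.sqrt c • x n, fun n => X.smul_mem _ (hxX n), ?_, fun n => c • w n, ?_, ?_⟩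
  · intro φ
    simpa [_root_.map_smul, smul_eq_mul] using (hxnull φ).const_mul (Real.sqrt c)
  · intro n
    filter_upwards [Lp.coeFn_smul c (w n), hw n, Lp.coeFn_smul (Real.sqrt c) (x n)]
      with ω h1 h2 h3
    rw [h1]
    simp only [Pi.smul_apply, smul_eq_mul]
    rw [h2, h3]
    simp only [Pi.smul_apply, smul_eq_mul, mul_pow]
    rw [Real.sq_sqrt hc]
  · intro φ
    simpa [_root_.map_smul, smul_eq_mul] using (hwlim φ).const_mul c

/-- The key claim: under failure of the `M`-bound, one finds normalized elements of `V(X)`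
almost concentrated on sets of arbitrarily small measure. -/
lemma key_claim (p : ℝ≥0∞) [Fact (1 ≤ p)] [Fact (1 ≤ p / 2)] (hp : 2 < p) (hp' : p ≠ ⊤)
    (X : Submodule ℝ (Lp ℝ p μ01))
    (hM : ¬ ∃ M > (0:ℝ), ∀ v ∈ VX p X, ‖v‖ ≤ M * (eLpNorm (⇑v) 1 μ01).toReal)
    {ε δ : ℝ} (hε : 0 < ε) (hδ : 0 < δ) :
    ∃ u ∈ VX p X, eLpNorm (⇑u) (p / 2) μ01 = 1 ∧
      ∃ B : Set ℝ, MeasurableSet B ∧ B ⊆ Set.Icc (0:ℝ) 1 ∧ μ01 B < ENNReal.ofReal δ ∧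
        ∫⁻ ω in Bᶜ, (‖(u : ℝ → ℝ) ω‖₊ : ℝ≥0∞) ^ (p / 2).toReal ∂μ01 < ENNReal.ofReal ε := by
  push_neg at hM
  set q : ℝ≥0∞ := p / 2 with hqdef
  have hqt : q ≠ ∞ := (ENNReal.div_lt_top hp' (by norm_num)).ne
  have hq1 : (1 : ℝ≥0∞) < q := by
    rw [hqdef, ENNReal.lt_div_iff_mul_lt (by norm_num) (by norm_num)]
    simpa using hp
  have hq0 : q ≠ 0 := by positivity
  set r : ℝ := q.toReal with hrdef
  have hr1 : 1 < r := by
    have := (ENNReal.toReal_lt_toReal (by norm_num) hqt).mpr hq1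
    simpa using this
  have hr0 : 0 < r := by linarith
  -- choose the threshold t and the constant M
  set t : ℝ := max 1 ((2 / δ) ^ (1 / r)) with htdef
  have ht1 : (1 : ℝ) ≤ t := le_max_left _ _
  have ht0 : (0 : ℝ) < t := by linarith
  have htr : 2 / δ ≤ t ^ r := by
    calc 2 / δ = ((2 / δ) ^ (1 / r)) ^ r := by
          rw [← Real.rpow_mul (by positivity), one_div, inv_mul_cancel₀ (by positivity),
            Real.rpow_one]
    _ ≤ t ^ r := Real.rpow_le_rpow (by positivity) (le_max_right _ _) (by positivity)
  set M : ℝ := max 1 (t ^ (r - 1) * 2 / ε) with hMdef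
  have hM1 : (1 : ℝ) ≤ M := le_max_left _ _
  have hMpos : (0 : ℝ) < M := by linarith
  obtain ⟨v, hvVX, hv2⟩ := hM M hMpos
  have ht1R : (0 : ℝ) ≤ (eLpNorm (⇑v) 1 μ01).toReal := ENNReal.toReal_nonneg
  have hv0 : 0 < ‖v‖ := lt_of_le_of_lt (by positivity) hv2
  -- normalize
  set c : ℝ := ‖v‖⁻¹ with hcdef
  have hc0 : 0 < c := by positivity
  set u : Lp ℝ q μ01 := c • v with hudef
  have huVX : u ∈ VX p X := vx_smul p X hvVX hc0.le
  have hu_norm : ‖u‖ = 1 := by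
    rw [hudef, norm_smul, hcdef, Real.norm_eq_abs, abs_inv, abs_of_pos hv0,
      inv_mul_cancel₀ hv0.ne']
  have heq1 : eLpNorm (⇑u) q μ01 = 1 := by
    rw [← ENNReal.toReal_eq_one_iff, ← Lp.norm_def]; exact hu_norm
  have htot : ∫⁻ ω, (‖(u : ℝ → ℝ) ω‖₊ : ℝ≥0∞) ^ r ∂μ01 = 1 :=
    lintegral_rpow_eq_one hq0 hqt heq1
  -- smallness in L¹
  have hfin : eLpNorm (⇑v) 1 μ01 ≠ ∞ :=
    ((Lp.memLp v).mono_exponent (le_of_lt hq1)).eLpNorm_ne_top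
  have hu1fin : eLpNorm (⇑u) 1 μ01 ≠ ∞ :=
    ((Lp.memLp u).mono_exponent (le_of_lt hq1)).eLpNorm_ne_top
  have hu1eq : eLpNorm (⇑u) 1 μ01 = (‖c‖₊ : ℝ≥0∞) * eLpNorm (⇑v) 1 μ01 := by
    rw [eLpNorm_congr_ae (Lp.coeFn_smul c v), eLpNorm_const_smul, enorm_eq_nnnorm]
  have hu1small : (eLpNorm (⇑u) 1 μ01).toReal < 1 / M := by
    rw [hu1eq, ENNReal.toReal_mul]
    have : (‖c‖₊ : ℝ≥0∞).toReal = c := by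
      simp [hcdef, Real.norm_eq_abs, abs_of_pos hc0]
    rw [this]
    have h3 : M * (c * (eLpNorm (⇑v) 1 μ01).toReal) < 1 := by
      have h4 := mul_lt_mul_of_pos_right hv2 (inv_pos.mpr hv0)
      rw [mul_inv_cancel₀ hv0.ne'] at h4
      calc M * (c * (eLpNorm (⇑v) 1 μ01).toReal)
          = M * (eLpNorm (⇑v) 1 μ01).toReal * ‖v‖⁻¹ := by rw [hcdef]; ring
        _ < 1 := h4
    rw [lt_div_iff₀' hMpos]
    exact h3
  have hu1lt : eLpNorm (⇑u) 1 μ01 < ENNReal.ofReal (1 / M) :=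
    (ENNReal.lt_ofReal_iff_toReal_lt hu1fin).mpr hu1small
  -- the set B
  have hgmeas : Measurable (u : ℝ → ℝ) := (Lp.stronglyMeasurable u).measurable
  set B : Set ℝ := Set.Icc (0:ℝ) 1 ∩ {ω | t < |(u : ℝ → ℝ) ω|} with hBdef
  have hBmeas : MeasurableSet B :=
    measurableSet_Icc.inter (measurableSet_lt measurable_const hgmeas.abs)
  have hBsub : B ⊆ Set.Icc (0:ℝ) 1 := Set.inter_subset_left
  -- Markov: small measure
  have hmarkov : ENNReal.ofReal t ^ r * μ01 B ≤ 1 := by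
    calc ENNReal.ofReal t ^ r * μ01 B
        = ∫⁻ _ in B, ENNReal.ofReal t ^ r ∂μ01 := (setLIntegral_const _ _).symm
      _ ≤ ∫⁻ ω in B, (‖(u : ℝ → ℝ) ω‖₊ : ℝ≥0∞) ^ r ∂μ01 := by
          apply lintegral_mono_ae
          filter_upwards [ae_restrict_mem hBmeas] with ω hω
          apply ENNReal.rpow_le_rpow _ hr0.le
          rw [← enorm_eq_nnnorm, ← ofReal_norm, Real.norm_eq_abs]
          exact ENNReal.ofReal_le_ofReal hω.2.le
      _ ≤ ∫⁻ ω, (‖(u : ℝ → ℝ) ω‖₊ : ℝ≥0∞) ^ r ∂μ01 := setLIntegral_le_lintegral _ _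
      _ = 1 := htot
  have hTpos : 0 < ENNReal.ofReal t ^ r :=
    ENNReal.rpow_pos (ENNReal.ofReal_pos.mpr ht0) ENNReal.ofReal_ne_top
  have hTne : ENNReal.ofReal t ^ r ≠ ∞ := by
    rw [ENNReal.ofReal_rpow_of_pos ht0]; exact ENNReal.ofReal_ne_top
  have hμB : μ01 B ≤ ENNReal.ofReal ((t ^ r)⁻¹) := by
    have h5 : μ01 B ≤ 1 / ENNReal.ofReal t ^ r := by
      rw [ENNReal.le_div_iff_mul_le (Or.inl hTpos.ne') (Or.inl hTne), mul_comm]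
      exact hmarkov
    rwa [one_div, ENNReal.ofReal_rpow_of_pos ht0,
      ← ENNReal.ofReal_inv_of_pos (by positivity)] at h5
  have hμBlt : μ01 B < ENNReal.ofReal δ := by
    refine lt_of_le_of_lt hμB ?_
    rw [ENNReal.ofReal_lt_ofReal_iff hδ]
    have h6 : (t ^ r)⁻¹ ≤ δ / 2 := by
      have h7 := inv_anti₀ (by positivity : (0:ℝ) < 2 / δ) htr
      rwa [inv_div] at h7
    linarith
  -- complement estimate
  have hTfin : ENNReal.ofReal t ^ (r - 1) ≠ ∞ := by
    rw [ENNReal.ofReal_rpow_of_pos ht0]; exact ENNReal.ofReal_ne_top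
  have hcomp : ∫⁻ ω in Bᶜ, (‖(u : ℝ → ℝ) ω‖₊ : ℝ≥0∞) ^ r ∂μ01
      ≤ ENNReal.ofReal t ^ (r - 1) * eLpNorm (⇑u) 1 μ01 := by
    have step1 : ∫⁻ ω in Bᶜ, (‖(u : ℝ → ℝ) ω‖₊ : ℝ≥0∞) ^ r ∂μ01
        ≤ ∫⁻ ω in Bᶜ, ENNReal.ofReal t ^ (r - 1) * (‖(u : ℝ → ℝ) ω‖₊ : ℝ≥0∞) ∂μ01 := by
      apply lintegral_mono_ae
      filter_upwards [ae_restrict_mem hBmeas.compl,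
        ae_mem_Icc01.filter_mono (ae_mono Measure.restrict_le_self)] with ω h1 h2
      have hle : (‖(u : ℝ → ℝ) ω‖₊ : ℝ≥0∞) ≤ ENNReal.ofReal t := by
        rw [← enorm_eq_nnnorm, ← ofReal_norm, Real.norm_eq_abs]
        apply ENNReal.ofReal_le_ofReal
        by_contra hcon
        push_neg at hcon
        exact h1 ⟨h2, hcon⟩
      exact rpow_le_aux hr1.le ENNReal.coe_ne_top hle
    calc ∫⁻ ω in Bᶜ, (‖(u : ℝ → ℝ) ω‖₊ : ℝ≥0∞) ^ r ∂μ01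
        ≤ ∫⁻ ω in Bᶜ, ENNReal.ofReal t ^ (r - 1) * (‖(u : ℝ → ℝ) ω‖₊ : ℝ≥0∞) ∂μ01 := step1
      _ = ENNReal.ofReal t ^ (r - 1) * ∫⁻ ω in Bᶜ, (‖(u : ℝ → ℝ) ω‖₊ : ℝ≥0∞) ∂μ01 :=
          lintegral_const_mul' _ _ hTfin
      _ ≤ ENNReal.ofReal t ^ (r - 1) * ∫⁻ ω, (‖(u : ℝ → ℝ) ω‖₊ : ℝ≥0∞) ∂μ01 :=
          mul_le_mul_right (setLIntegral_le_lintegral _ _) _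
      _ = ENNReal.ofReal t ^ (r - 1) * eLpNorm (⇑u) 1 μ01 := by
          simp only [eLpNorm_one_eq_lintegral_enorm, enorm_eq_nnnorm]
  have hreal : t ^ (r - 1) * (1 / M) ≤ ε / 2 := by
    have hM2 : t ^ (r - 1) * 2 / ε ≤ M := le_max_right _ _
    have htr1 : (0:ℝ) < t ^ (r - 1) := Real.rpow_pos_of_pos ht0 _
    rw [mul_one_div, div_le_iff₀ hMpos]
    have h8 : ε / 2 * (t ^ (r - 1) * 2 / ε) ≤ ε / 2 * M :=
      mul_le_mul_of_nonneg_left hM2 (half_pos hε).le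
    have h9 : ε / 2 * (t ^ (r - 1) * 2 / ε) = t ^ (r - 1) := by
      field_simp
    linarith
  have hlast : ENNReal.ofReal t ^ (r - 1) * eLpNorm (⇑u) 1 μ01 < ENNReal.ofReal ε := by
    calc ENNReal.ofReal t ^ (r - 1) * eLpNorm (⇑u) 1 μ01
        ≤ ENNReal.ofReal (t ^ (r - 1)) * ENNReal.ofReal (1 / M) := by
          rw [ENNReal.ofReal_rpow_of_pos ht0]
          exact mul_le_mul_right hu1lt.le _
      _ = ENNReal.ofReal (t ^ (r - 1) * (1 / M)) := (ENNReal.ofReal_mul (by positivity)).symm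
      _ ≤ ENNReal.ofReal (ε / 2) := ENNReal.ofReal_le_ofReal hreal
      _ < ENNReal.ofReal ε := by rw [ENNReal.ofReal_lt_ofReal_iff hε]; linarith
  exact ⟨u, huVX, heq1, B, hBmeas, hBsub, hμBlt, lt_of_le_of_lt hcomp hlast⟩

lemma exists_delta {ι : Type*} (s : Finset ι) (F : ι → ℝ → ℝ≥0∞)
    (hF : ∀ x ∈ s, ∫⁻ ω, F x ω ∂μ01 ≠ ∞) {ε : ℝ≥0∞} (hε : ε ≠ 0) :
    ∃ δ : ℝ≥0∞, 0 < δ ∧ ∀ x ∈ s, ∀ E : Set ℝ, μ01 E < δ → ∫⁻ ω in E, F x ω ∂μ01 < ε := by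
  classical
  revert hF
  induction s using Finset.induction_on with
  | empty => exact fun _ => ⟨1, one_pos, by simp⟩
  | @insert a s _ ih =>
    intro hF
    obtain ⟨δ1, hδ1, h1⟩ := ih fun x hxs => hF x (Finset.mem_insert_of_mem hxs)
    obtain ⟨δ2, hδ2, h2⟩ :=
      exists_pos_setLIntegral_lt_of_measure_lt (hF _ (Finset.mem_insert_self _ _)) hε
    refine ⟨min δ1 δ2, lt_min hδ1 hδ2, ?_⟩
    intro x hxs E hE
    rcases Finset.mem_insert.mp hxs with rfl | hxs
    · exact h2 E (hE.trans_le (min_le_right _ _))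
    · exact h1 x hxs E (hE.trans_le (min_le_left _ _))

theorem statement4 (p : ℝ≥0∞) [Fact (1 ≤ p)] [Fact (1 ≤ p / 2)] (hp : 2 < p) (hp' : p ≠ ⊤)
    (X : Submodule ℝ (Lp ℝ p μ01)) (hX : IsClosed (X : Set (Lp ℝ p μ01))) :
    (∃ M > (0:ℝ), ∀ v ∈ VX p X, ‖v‖ ≤ M * (eLpNorm (⇑v) 1 μ01).toReal) ∨
    ((¬ ∃ M > (0:ℝ), ∀ v ∈ VX p X, ‖v‖ ≤ M * (eLpNorm (⇑v) 1 μ01).toReal) ∧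
      ∃ (A : ℕ → Set ℝ) (v : ℕ → Lp ℝ (p / 2) μ01),
        (∀ i, MeasurableSet (A i)) ∧ (∀ i, A i ⊆ Set.Icc (0:ℝ) 1) ∧
        (Pairwise fun i j => Disjoint (A i) (A j)) ∧
        (∀ i, v i ∈ VX p X) ∧
        Tendsto (fun i => (eLpNorm ((A i).indicator (⇑(v i))) (p / 2) μ01).toReal)
          atTop (𝓝 1) ∧
        Tendsto
          (fun i => (eLpNorm ((Set.Icc (0:ℝ) 1 \ A i).indicator (⇑(v i))) (p / 2) μ01).toReal)
          atTop (𝓝 0)) := by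
  by_cases h : ∃ M > (0:ℝ), ∀ v ∈ VX p X, ‖v‖ ≤ M * (eLpNorm (⇑v) 1 μ01).toReal
  · exact Or.inl h
  refine Or.inr ⟨h, ?_⟩
  have hqt : p / 2 ≠ ∞ := (ENNReal.div_lt_top hp' (by norm_num)).ne
  have hq1 : (1 : ℝ≥0∞) < p / 2 := by
    rw [ENNReal.lt_div_iff_mul_lt (by norm_num) (by norm_num)]
    simpa using hp
  have hq0 : p / 2 ≠ 0 := by positivity
  set r : ℝ := (p / 2).toReal with hrdef
  have hr1 : 1 < r := by
    have h2 := (ENNReal.toReal_lt_toReal (by norm_num : (1:ℝ≥0∞) ≠ ⊤) hqt).mpr hq1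
    rwa [ENNReal.toReal_one] at h2
  have hr0 : 0 < r := by linarith
  -- the inductive construction via `exists_seq_of_forall_finset_exists`
  set σ := ℕ × Lp ℝ (p / 2) μ01 × Set ℝ with hσdef
  set P : σ → Prop := fun a =>
    a.2.1 ∈ VX p X ∧ eLpNorm (⇑a.2.1) (p / 2) μ01 = 1 ∧ MeasurableSet a.2.2 ∧
      a.2.2 ⊆ Set.Icc (0:ℝ) 1 ∧
      ∫⁻ ω in a.2.2ᶜ, (‖(a.2.1 : ℝ → ℝ) ω‖₊ : ℝ≥0∞) ^ r ∂μ01 ≤ (2:ℝ≥0∞)⁻¹ ^ a.1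
    with hPdef
  set rel : σ → σ → Prop := fun a b =>
    a.1 < b.1 ∧ ∫⁻ ω in b.2.2, (‖(a.2.1 : ℝ → ℝ) ω‖₊ : ℝ≥0∞) ^ r ∂μ01 ≤ (2:ℝ≥0∞)⁻¹ ^ b.1
    with hreldef
  have hstep : ∀ s : Finset σ, (∀ x ∈ s, P x) → ∃ y, P y ∧ ∀ x ∈ s, rel x y := by
    intro s hs
    set k : ℕ := (s.sup fun a => a.1) + 1 with hkdef
    have hk : ∀ x ∈ s, x.1 < k := fun x hx => Nat.lt_succ_of_le (Finset.le_sup hx)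
    have hεne : ((2:ℝ≥0∞)⁻¹ ^ k) ≠ 0 := by
      apply pow_ne_zero
      simp
    obtain ⟨δ', hδ'pos, hδ'⟩ := exists_delta s
      (fun a ω => (‖(a.2.1 : ℝ → ℝ) ω‖₊ : ℝ≥0∞) ^ r)
      (fun x hx => by rw [lintegral_rpow_eq_one hq0 hqt (hs x hx).2.1]; exact one_ne_top) hεne
    obtain ⟨d, hd0, hdle⟩ : ∃ d : ℝ, 0 < d ∧ ENNReal.ofReal d ≤ δ' := by
      rcases eq_or_ne δ' ∞ with rfl | hne
      · exact ⟨1, one_pos, le_top⟩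
      · exact ⟨δ'.toReal, ENNReal.toReal_pos hδ'pos.ne' hne, (ENNReal.ofReal_toReal hne).le⟩
    obtain ⟨u, huVX, hunorm, B, hBmeas, hBsub, hBlt, hBint⟩ :=
      key_claim p hp hp' X h (ε := (2:ℝ)⁻¹ ^ k) (by positivity) hd0
    have hofReal : ENNReal.ofReal ((2:ℝ)⁻¹ ^ k) = (2:ℝ≥0∞)⁻¹ ^ k := by
      rw [ENNReal.ofReal_pow (by norm_num), ENNReal.ofReal_inv_of_pos (by norm_num)]
      norm_num
    refine ⟨(k, u, B), ⟨huVX, hunorm, hBmeas, hBsub, le_of_lt (hofReal ▸ hBint)⟩, ?_⟩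
    intro x hx
    exact ⟨hk x hx, (hδ' x hx B (lt_of_lt_of_le hBlt hdle)).le⟩
  obtain ⟨f, hPf, hrelf⟩ := exists_seq_of_forall_finset_exists P rel hstep
  have kmono : StrictMono fun n => (f n).1 := fun m n hmn => (hrelf m n hmn).1
  have hkn : ∀ n, n ≤ (f n).1 := fun n => kmono.le_apply
  set c : ℝ≥0∞ := 2⁻¹ with hcdef
  have hc1 : c ≤ 1 := by rw [hcdef]; simp [ENNReal.inv_le_one]
  have hcne : c ≠ ∞ := by rw [hcdef]; simp
  have hc_pow : ∀ {m n : ℕ}, m ≤ n → c ^ n ≤ c ^ m := fun hmn =>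
    pow_le_pow_right_of_le_one' hc1 hmn
  set U : ℕ → Set ℝ := fun n => ⋃ j, (f (n + 1 + j)).2.2 with hUdef
  set A : ℕ → Set ℝ := fun n => (f n).2.2 \ U n with hAdef
  have hAmeas : ∀ n, MeasurableSet (A n) := fun n =>
    ((hPf n).2.2.1).diff (MeasurableSet.iUnion fun j => (hPf (n + 1 + j)).2.2.1)
  have hAsub : ∀ n, A n ⊆ Set.Icc (0:ℝ) 1 := fun n =>
    Set.diff_subset.trans (hPf n).2.2.2.1
  have hltdisj : ∀ i j, i < j → Disjoint (A i) (A j) := by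
    intro i j hij
    rw [Set.disjoint_left]
    intro x hxi hxj
    apply hxi.2
    have hsub : (f j).2.2 ⊆ U i := by
      have hj : i + 1 + (j - i - 1) = j := by omega
      have := Set.subset_iUnion (fun l => (f (i + 1 + l)).2.2) (j - i - 1)
      rwa [hj] at this
    exact hsub hxj.1
  have hdisj : Pairwise fun i j => Disjoint (A i) (A j) := fun i j hne =>
    (Ne.lt_or_gt hne).elim (hltdisj i j) fun hji => (hltdisj j i hji).symm
  -- the complement integrals
  set τ : ℕ → ℝ≥0∞ := fun n =>
    ∫⁻ ω in (A n)ᶜ, (‖((f n).2.1 : ℝ → ℝ) ω‖₊ : ℝ≥0∞) ^ r ∂μ01 with hτdef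
  set I : ℕ → ℝ≥0∞ := fun n =>
    ∫⁻ ω in A n, (‖((f n).2.1 : ℝ → ℝ) ω‖₊ : ℝ≥0∞) ^ r ∂μ01 with hIdef
  have hτbound : ∀ n, τ n ≤ c ^ n + c ^ n := by
    intro n
    have hAc : (A n)ᶜ = (f n).2.2ᶜ ∪ U n := by
      rw [hAdef]
      simp only [Set.diff_eq, Set.compl_inter, compl_compl]
    calc τ n = ∫⁻ ω in (f n).2.2ᶜ ∪ U n,
          (‖((f n).2.1 : ℝ → ℝ) ω‖₊ : ℝ≥0∞) ^ r ∂μ01 := by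
            show (∫⁻ ω in (A n)ᶜ, (‖((f n).2.1 : ℝ → ℝ) ω‖₊ : ℝ≥0∞) ^ r ∂μ01) = _
            rw [hAc]
      _ ≤ (∫⁻ ω in (f n).2.2ᶜ, (‖((f n).2.1 : ℝ → ℝ) ω‖₊ : ℝ≥0∞) ^ r ∂μ01)
          + ∫⁻ ω in U n, (‖((f n).2.1 : ℝ → ℝ) ω‖₊ : ℝ≥0∞) ^ r ∂μ01 :=
          lintegral_union_le _ _ _
      _ ≤ c ^ n + ∑' j, ∫⁻ ω in (f (n + 1 + j)).2.2,
            (‖((f n).2.1 : ℝ → ℝ) ω‖₊ : ℝ≥0∞) ^ r ∂μ01 :=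
          add_le_add ((hPf n).2.2.2.2.trans (hc_pow (hkn n))) (lintegral_iUnion_le _ _)
      _ ≤ c ^ n + ∑' j, c ^ (n + 1 + j) := by
          refine add_le_add_right (ENNReal.tsum_le_tsum fun j => ?_) _
          exact ((hrelf n (n + 1 + j) (by omega)).2).trans (hc_pow (hkn (n + 1 + j)))
      _ = c ^ n + c ^ (n + 1) * (1 - c)⁻¹ := by
          simp_rw [pow_add]
          rw [ENNReal.tsum_mul_left, ENNReal.tsum_geometric]
      _ = c ^ n + c ^ n := by
          rw [hcdef, ENNReal.one_sub_inv_two, inv_inv, pow_succ, mul_assoc,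
            ENNReal.inv_mul_cancel (by norm_num) (by norm_num), mul_one]
  have htotn : ∀ n, ∫⁻ ω, (‖((f n).2.1 : ℝ → ℝ) ω‖₊ : ℝ≥0∞) ^ r ∂μ01 = 1 := fun n =>
    lintegral_rpow_eq_one hq0 hqt (hPf n).2.1
  have hsplit : ∀ n, I n + τ n = 1 := by
    intro n
    simp only [hIdef, hτdef]
    rw [← htotn n]
    exact lintegral_add_compl _ (hAmeas n)
  have hτfin : ∀ n, τ n ≠ ∞ := by
    intro n
    have := hsplit n
    intro hcon
    rw [hcon, add_top] at this
    exact one_ne_top this.symm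
  have hIfin : ∀ n, I n ≠ ∞ := by
    intro n
    have := hsplit n
    intro hcon
    rw [hcon, top_add] at this
    exact one_ne_top this.symm
  have hτreal : ∀ n, (τ n).toReal ≤ 2 * (1/2:ℝ) ^ n := by
    intro n
    have h2 : ((c ^ n + c ^ n : ℝ≥0∞)).toReal = 2 * (1/2:ℝ) ^ n := by
      rw [ENNReal.toReal_add (ENNReal.pow_ne_top hcne) (ENNReal.pow_ne_top hcne),
        ENNReal.toReal_pow, hcdef]
      norm_num
      ring
    calc (τ n).toReal ≤ ((c ^ n + c ^ n : ℝ≥0∞)).toReal := by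
          apply ENNReal.toReal_mono _ (hτbound n)
          exact ENNReal.add_ne_top.mpr ⟨ENNReal.pow_ne_top hcne, ENNReal.pow_ne_top hcne⟩
      _ = 2 * (1/2:ℝ) ^ n := h2
  have hτ0 : Tendsto (fun n => (τ n).toReal) atTop (𝓝 0) := by
    apply squeeze_zero (fun n => ENNReal.toReal_nonneg) hτreal
    have := (tendsto_pow_atTop_nhds_zero_of_lt_one (by norm_num : (0:ℝ) ≤ 1/2)
      (by norm_num : (1/2:ℝ) < 1)).const_mul (2:ℝ)
    simpa using this
  have hIτ : ∀ n, (I n).toReal = 1 - (τ n).toReal := by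
    intro n
    have := congrArg ENNReal.toReal (hsplit n)
    rw [ENNReal.toReal_add (hIfin n) (hτfin n), ENNReal.toReal_one] at this
    linarith
  have hI1 : Tendsto (fun n => (I n).toReal) atTop (𝓝 1) := by
    have : Tendsto (fun n => 1 - (τ n).toReal) atTop (𝓝 1) := by
      simpa using tendsto_const_nhds.sub hτ0
    exact this.congr fun n => (hIτ n).symm
  refine ⟨A, fun n => (f n).2.1, hAmeas, hAsub, hdisj, fun n => (hPf n).1, ?_, ?_⟩
  · have heq : ∀ i, (eLpNorm ((A i).indicator ⇑((f i).2.1)) (p / 2) μ01).toReal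
        = (I i).toReal ^ (1/r) := by
      intro i
      rw [eLpNorm_indicator_eq_eLpNorm_restrict (hAmeas i),
        eLpNorm_eq_lintegral_rpow_enorm_toReal hq0 hqt, ← ENNReal.toReal_rpow, one_div]
      simp only [enorm_eq_nnnorm]; rfl
    have hcont : Tendsto (fun i => (I i).toReal ^ (1/r)) atTop (𝓝 1) := by
      have h2 := (Real.continuousAt_rpow_const 1 (1/r) (Or.inl one_ne_zero)).tendsto.comp hI1
      have h3 : (1:ℝ) ^ (1/r:ℝ) = 1 := Real.one_rpow _
      simpa [Function.comp_def, h3] using h2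
    exact hcont.congr fun i => (heq i).symm
  · have heq : ∀ i, (eLpNorm ((Set.Icc (0:ℝ) 1 \ A i).indicator ⇑((f i).2.1)) (p / 2) μ01).toReal
        = (τ i).toReal ^ (1/r) := by
      intro i
      have hae : (Set.Icc (0:ℝ) 1 \ A i).indicator ⇑((f i).2.1)
          =ᵐ[μ01] (A i)ᶜ.indicator ⇑((f i).2.1) := by
        filter_upwards [ae_mem_Icc01] with ω hω
        by_cases hA : ω ∈ A i
        · simp [Set.indicator_apply, Set.mem_diff, hA]
        · simp [Set.indicator_apply, Set.mem_diff, hA, hω]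
      rw [eLpNorm_congr_ae hae, eLpNorm_indicator_eq_eLpNorm_restrict (hAmeas i).compl,
        eLpNorm_eq_lintegral_rpow_enorm_toReal hq0 hqt, ← ENNReal.toReal_rpow, one_div]
      simp only [enorm_eq_nnnorm]; rfl
    have hcont : Tendsto (fun i => (τ i).toReal ^ (1/r)) atTop (𝓝 0) := by
      have h2 := (Real.continuousAt_rpow_const 0 (1/r) (Or.inr (by positivity))).tendsto.comp hτ0
      have h3 : (0:ℝ) ^ (1/r:ℝ) = 0 := Real.zero_rpow (by positivity)
      have h4 : Tendsto (fun i => (τ i).toReal ^ (1/r)) atTop (𝓝 ((0:ℝ) ^ (1/r:ℝ))) := h2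
      rwa [h3] at h4
    exact hcont.congr fun i => (heq i).symm


end
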